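/- Let G be a connected graph of order n with girth g(G) ≥ 4 and minimum degree δ ≥ 3. Then γ^t_StR(G) ≤ n − ⌊g(G)/3⌋. -/

import Mathlib

open Finset

variable {V : Type*} [Fintype V]

/-- The degree of a vertex. -/
noncomputable def degN (G : SimpleGraph V) (v : V) : ℕ := {u | G.Adj v u}.ncard

/-- Maximum degree. -/
noncomputable def maxDeg (G : SimpleGraph V) : ℕ := Finset.univ.sup (degN G)

/-- Minimum degree. -/
noncomputable def minDeg (G : SimpleGraph V) : ℕ := sInf {d | ∃ v, degN G v = d}

/-- No isolated vertex. -/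
def NoIsolated (G : SimpleGraph V) : Prop := ∀ v, ∃ u, G.Adj v u

/-- Total strong Roman dominating function. `(Δ+1)/2 = ⌈Δ/2⌉` and
`(m+1)/2 = ⌈m/2⌉` in natural-number arithmetic. -/
def IsTSRDF (G : SimpleGraph V) (f : V → ℕ) : Prop :=
  (∀ v, f v ≤ (maxDeg G + 1) / 2 + 1) ∧
  (∀ v, f v = 0 → ∃ u, G.Adj v u ∧
      1 + ({w | G.Adj u w ∧ f w = 0}.ncard + 1) / 2 ≤ f u) ∧
  (∀ v, 0 < f v → ∃ u, G.Adj v u ∧ 0 < f u)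

/-- The total strong Roman domination number. -/
noncomputable def tsrd (G : SimpleGraph V) : ℕ :=
  sInf {k | ∃ f : V → ℕ, IsTSRDF G f ∧ ∑ v, f v = k}

open SimpleGraph

set_option linter.unusedSectionVars false

lemma support_getElem_eq {G : SimpleGraph V} {u v : V} (w : G.Walk u v) (i : ℕ)
    (h : i < w.support.length) : w.support[i] = w.getVert i := by
  induction w generalizing i with
  | nil => simp at h; simp [h]
  | cons hadj p ih =>
    cases i with
    | zero => simp
    | succ n =>
      simp only [Walk.support_cons, Walk.getVert_cons_succ]
      rw [List.getElem_cons_succ]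
      exact ih n (by simpa [Walk.support_cons] using h)

lemma cycle_getVert_injOn {G : SimpleGraph V} {a : V} {w : G.Walk a a} (hw : w.IsCycle)
    {i j : ℕ} (hi : i < w.length) (hj : j < w.length) (hij : w.getVert i = w.getVert j) :
    i = j := by
  have hnd : w.support.tail.Nodup := hw.2
  have hlen : w.support.length = w.length + 1 := w.length_support
  have htl : w.support.tail.length = w.length := by
    rw [List.length_tail, hlen]; omega
  have hl3 := hw.three_le_length
  have key : ∀ k, ∀ (h : k < w.support.tail.length), w.support.tail[k] = w.getVert (k+1) := by
    intro k h
    rw [List.getElem_tail]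
    exact support_getElem_eq w (k+1) (by omega)
  have key2 : ∀ k (h1 : 0 < k) (h2 : k ≤ w.length),
      w.support.tail[k-1]'(by omega) = w.getVert k := by
    intro k h1 h2
    have := key (k-1) (by omega)
    rwa [Nat.sub_add_cancel h1] at this
  rcases Nat.eq_zero_or_pos i with rfl | hi0
  · rcases Nat.eq_zero_or_pos j with rfl | hj0
    · rfl
    · exfalso
      have h1 := key2 j hj0 (by omega)
      have h2 := key2 w.length (by omega) le_rfl
      rw [w.getVert_length] at h2
      rw [w.getVert_zero] at hij
      have := (List.Nodup.getElem_inj_iff hnd (hi := by omega) (hj := by omega)).mp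
        (h1.trans (hij.symm.trans h2.symm))
      omega
  · rcases Nat.eq_zero_or_pos j with rfl | hj0
    · exfalso
      have h1 := key2 i hi0 (by omega)
      have h2 := key2 w.length (by omega) le_rfl
      rw [w.getVert_length] at h2
      rw [w.getVert_zero] at hij
      have := (List.Nodup.getElem_inj_iff hnd (hi := by omega) (hj := by omega)).mp
        (h1.trans (hij.trans h2.symm))
      omega
    · have h1 := key2 i hi0 (by omega)
      have h2 := key2 j hj0 (by omega)
      have := (List.Nodup.getElem_inj_iff hnd (hi := by omega) (hj := by omega)).mp
        (h1.trans (hij.trans h2.symm))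
      omega

lemma seg_exists {G : SimpleGraph V} {u v : V} (w : G.Walk u v) :
    ∀ (d i : ℕ), i + d ≤ w.length →
    ∃ p : G.Walk (w.getVert i) (w.getVert (i+d)), p.length = d ∧
      p.support = (List.range' i (d+1)).map w.getVert ∧
      p.edges = (List.range' i d).map (fun k => s(w.getVert k, w.getVert (k+1))) := by
  intro d
  induction d with
  | zero => intro i h; exact ⟨Walk.nil.copy rfl (by simp), by simp, by simp, by simp⟩
  | succ d ih =>
    intro i h
    obtain ⟨p, hl, hs, he⟩ := ih (i+1) (by omega)
    have hadj : G.Adj (w.getVert i) (w.getVert (i+1)) := w.adj_getVert_succ (by omega)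
    refine ⟨(Walk.cons hadj p).copy rfl (by ring_nf), by simp [hl], ?_, ?_⟩
    · rw [Walk.support_copy, Walk.support_cons, hs]
      symm
      rw [List.range'_succ, List.map_cons, List.range'_succ, List.map_cons]
    · rw [Walk.edges_copy, Walk.edges_cons, he]
      symm
      rw [List.range'_succ, List.map_cons]

lemma girth_le_of_cycle {G : SimpleGraph V} {x : V} {q : G.Walk x x} (hq : q.IsCycle) :
    G.girth ≤ q.length := by
  have h1 : G.egirth ≤ (q.length : ℕ∞) := by
    refine iInf_le_of_le x (iInf_le_of_le q (iInf_le_of_le hq le_rfl))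
  have := ENat.toNat_le_toNat h1 (by simp)
  simpa [SimpleGraph.girth] using this

lemma no_chord {G : SimpleGraph V} {a : V} {w : G.Walk a a} (hw : w.IsCycle)
    (hgw : G.girth = w.length) {i j : ℕ} (hij : i < j) (hj : j < w.length)
    (hadj : G.Adj (w.getVert i) (w.getVert j)) :
    j = i + 1 ∨ (i = 0 ∧ j = w.length - 1) := by
  have hl3 := hw.three_le_length
  by_contra hcon
  push_neg at hcon
  obtain ⟨p, hl, hs, he⟩ := seg_exists w (j - i) i (by omega)
  have hji : i + (j - i) = j := by omega
  let p' : G.Walk (w.getVert i) (w.getVert j) := p.copy rfl (by rw [hji])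
  have hs' : p'.support = (List.range' i (j - i + 1)).map w.getVert := by
    simpa [p'] using hs
  have he' : p'.edges = (List.range' i (j - i)).map
      (fun k => s(w.getVert k, w.getVert (k+1))) := by simpa [p'] using he
  have hpath : p'.IsPath := by
    rw [Walk.isPath_def, hs']
    refine List.Nodup.map_on ?_ (List.nodup_range' _ (by omega))
    intro x hx y hy hxy
    rw [List.mem_range'_1] at hx hy
    exact cycle_getVert_injOn hw (by omega) (by omega) hxy
  have hne : s(w.getVert j, w.getVert i) ∉ p'.edges := by
    rw [he']
    intro hmem
    rw [List.mem_map] at hmem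
    obtain ⟨k, hk, hkeq⟩ := hmem
    rw [List.mem_range'_1] at hk
    rw [Sym2.eq_iff] at hkeq
    rcases hkeq with ⟨h1, h2⟩ | ⟨h1, h2⟩
    · have e1 := cycle_getVert_injOn hw (by omega) hj h1
      have e2 := cycle_getVert_injOn hw (by omega) (by omega) h2
      omega
    · have e1 := cycle_getVert_injOn hw (by omega) (by omega) h1
      have e2 := cycle_getVert_injOn hw (by omega) hj h2
      omega
  have hcyc : (Walk.cons hadj.symm p').IsCycle :=
    (Walk.cons_isCycle_iff p' hadj.symm).mpr ⟨hpath, hne⟩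
  have := girth_le_of_cycle hcyc
  rw [hgw] at this
  simp only [Walk.length_cons, Walk.length_copy, p'] at this
  omega

lemma offcycle_pair_a {G : SimpleGraph V} {a : V} {w : G.Walk a a} (hw : w.IsCycle)
    (hgw : G.girth = w.length) {u : V} (hu : ∀ k, k ≤ w.length → u ≠ w.getVert k)
    {i j : ℕ} (hij : i < j) (hj : j < w.length)
    (h1 : G.Adj u (w.getVert i)) (h2 : G.Adj u (w.getVert j)) :
    w.length ≤ j - i + 2 := by
  obtain ⟨p, hl, hs, he⟩ := seg_exists w (j - i) i (by omega)
  have hji : i + (j - i) = j := by omega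
  let p' : G.Walk (w.getVert i) (w.getVert j) := p.copy rfl (by rw [hji])
  have hs' : p'.support = (List.range' i (j - i + 1)).map w.getVert := by
    simpa [p'] using hs
  have he' : p'.edges = (List.range' i (j - i)).map
      (fun k => s(w.getVert k, w.getVert (k+1))) := by simpa [p'] using he
  let q : G.Walk (w.getVert i) u := p'.concat h2.symm
  have hqs : q.support = p'.support ++ [u] := by
    rw [Walk.support_concat]
  have hqe : q.edges = p'.edges ++ [s(w.getVert j, u)] := by
    rw [Walk.edges_concat, List.concat_eq_append]
  have hpath : q.IsPath := by
    rw [Walk.isPath_def, hqs]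
    refine List.Nodup.append ?_ (List.nodup_singleton u) ?_
    · rw [hs']
      refine List.Nodup.map_on ?_ (List.nodup_range' _ (by omega))
      intro x hx y hy hxy
      rw [List.mem_range'_1] at hx hy
      exact cycle_getVert_injOn hw (by omega) (by omega) hxy
    · intro x hx hx2
      rw [List.mem_singleton] at hx2
      subst hx2
      rw [hs', List.mem_map] at hx
      obtain ⟨k, hk, hkeq⟩ := hx
      rw [List.mem_range'_1] at hk
      exact hu k (by omega) hkeq.symm
  have hne : s(u, w.getVert i) ∉ q.edges := by
    rw [hqe, List.mem_append]
    rintro (hmem | hmem)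
    · rw [he', List.mem_map] at hmem
      obtain ⟨k, hk, hkeq⟩ := hmem
      rw [List.mem_range'_1] at hk
      rw [Sym2.eq_iff] at hkeq
      rcases hkeq with ⟨e1, _⟩ | ⟨_, e2⟩
      · exact hu k (by omega) e1.symm
      · exact hu (k+1) (by omega) e2.symm
    · rw [List.mem_singleton, Sym2.eq_iff] at hmem
      rcases hmem with ⟨e1, _⟩ | ⟨_, e2⟩
      · exact hu j (by omega) e1
      · exact absurd (cycle_getVert_injOn hw (by omega) hj e2) (by omega)
  have hcyc : (Walk.cons h1 q).IsCycle :=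
    (Walk.cons_isCycle_iff q h1).mpr ⟨hpath, hne⟩
  have := girth_le_of_cycle hcyc
  rw [hgw] at this
  simp only [Walk.length_cons, Walk.length_concat, Walk.length_copy, p', q] at this
  omega

lemma offcycle_pair_b {G : SimpleGraph V} {a : V} {w : G.Walk a a} (hw : w.IsCycle)
    (hgw : G.girth = w.length) {u : V} (hu : ∀ k, k ≤ w.length → u ≠ w.getVert k)
    {i j : ℕ} (hij : i < j) (hj : j < w.length)
    (h1 : G.Adj u (w.getVert i)) (h2 : G.Adj u (w.getVert j)) :
    w.length ≤ (w.length - j) + i + 2 := by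
  have hl3 := hw.three_le_length
  obtain ⟨p1, hl1, hs1, he1⟩ := seg_exists w (w.length - j) j (by omega)
  obtain ⟨p2, hl2, hs2, he2⟩ := seg_exists w i 0 (by omega)
  have e1 : w.getVert (j + (w.length - j)) = w.getVert 0 := by
    rw [show j + (w.length - j) = w.length by omega, Walk.getVert_length, Walk.getVert_zero]
  have e2 : (0 : ℕ) + i = i := by omega
  let p1' : G.Walk (w.getVert j) (w.getVert 0) := p1.copy rfl e1
  let p2' : G.Walk (w.getVert 0) (w.getVert i) := p2.copy rfl (by rw [e2])
  let q0 : G.Walk (w.getVert j) (w.getVert i) := p1'.append p2'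
  let q : G.Walk (w.getVert j) u := q0.concat h1.symm
  -- support
  have hs2' : p2'.support = (List.range' 0 (i+1)).map w.getVert := by simpa [p2'] using hs2
  have htail : p2'.support.tail = (List.range' 1 i).map w.getVert := by
    rw [hs2', List.range'_succ, List.map_cons, List.tail_cons]
  have hq0s : q0.support = (List.range' j (w.length - j + 1) ++ List.range' 1 i).map w.getVert := by
    rw [Walk.support_append, htail]
    simp only [Walk.support_copy, p1', q0, List.map_append]
    rw [hs1]
  have hqs : q.support = (List.range' j (w.length - j + 1) ++ List.range' 1 i).map w.getVert
      ++ [u] := by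
    rw [Walk.support_concat, hq0s]
  -- key injectivity on the index list
  have hmemL : ∀ x ∈ List.range' j (w.length - j + 1) ++ List.range' 1 i,
      (j ≤ x ∧ x ≤ w.length) ∨ (1 ≤ x ∧ x ≤ i) := by
    intro x hx
    rw [List.mem_append, List.mem_range'_1, List.mem_range'_1] at hx
    omega
  have hinj : ∀ x ∈ List.range' j (w.length - j + 1) ++ List.range' 1 i,
      ∀ y ∈ List.range' j (w.length - j + 1) ++ List.range' 1 i,
      w.getVert x = w.getVert y → x = y := by
    intro x hx y hy hxy
    have hx' := hmemL x hx
    have hy' := hmemL y hy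
    rcases eq_or_lt_of_le (show x ≤ w.length by omega) with rfl | hxlt
    · rcases eq_or_lt_of_le (show y ≤ w.length by omega) with rfl | hylt
      · rfl
      · exfalso
        rw [Walk.getVert_length] at hxy
        have := cycle_getVert_injOn hw (show 0 < w.length by omega) hylt
          (w.getVert_zero.trans hxy)
        omega
    · rcases eq_or_lt_of_le (show y ≤ w.length by omega) with rfl | hylt
      · exfalso
        rw [Walk.getVert_length] at hxy
        have := cycle_getVert_injOn hw hxlt (show 0 < w.length by omega)
          (hxy.trans w.getVert_zero.symm)
        omega
      · exact cycle_getVert_injOn hw hxlt hylt hxy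
  have hLnd : (List.range' j (w.length - j + 1) ++ List.range' 1 i).Nodup := by
    refine List.Nodup.append (List.nodup_range' _ (by omega)) (List.nodup_range' _ (by omega)) ?_
    intro x hx hx2
    rw [List.mem_range'_1] at hx hx2
    omega
  have hpath : q.IsPath := by
    rw [Walk.isPath_def, hqs]
    refine List.Nodup.append (List.Nodup.map_on hinj hLnd) (List.nodup_singleton u) ?_
    intro x hx hx2
    rw [List.mem_singleton] at hx2
    subst hx2
    rw [List.mem_map] at hx
    obtain ⟨k, hk, hkeq⟩ := hx
    have := hmemL k hk
    exact hu k (by omega) hkeq.symm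
  -- edges
  have hq0e : q0.edges = (List.range' j (w.length - j)).map
      (fun k => s(w.getVert k, w.getVert (k+1))) ++ (List.range' 0 i).map
      (fun k => s(w.getVert k, w.getVert (k+1))) := by
    rw [show q0.edges = p1'.edges ++ p2'.edges from Walk.edges_append _ _]
    simp only [Walk.edges_copy, p1', p2']
    rw [he1, he2]
  have hqe : q.edges = q0.edges ++ [s(w.getVert i, u)] := by
    rw [Walk.edges_concat, List.concat_eq_append]
  have hne : s(u, w.getVert j) ∉ q.edges := by
    rw [hqe, hq0e, List.mem_append, List.mem_append]
    rintro ((hmem | hmem) | hmem)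
    · rw [List.mem_map] at hmem
      obtain ⟨k, hk, hkeq⟩ := hmem
      rw [List.mem_range'_1] at hk
      rw [Sym2.eq_iff] at hkeq
      rcases hkeq with ⟨e1', _⟩ | ⟨_, e2'⟩
      · exact hu k (by omega) e1'.symm
      · exact hu (k+1) (by omega) e2'.symm
    · rw [List.mem_map] at hmem
      obtain ⟨k, hk, hkeq⟩ := hmem
      rw [List.mem_range'_1] at hk
      rw [Sym2.eq_iff] at hkeq
      rcases hkeq with ⟨e1', _⟩ | ⟨_, e2'⟩
      · exact hu k (by omega) e1'.symm
      · exact hu (k+1) (by omega) e2'.symm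
    · rw [List.mem_singleton, Sym2.eq_iff] at hmem
      rcases hmem with ⟨e1', _⟩ | ⟨_, e2'⟩
      · exact hu i (by omega) e1'
      · exact absurd (cycle_getVert_injOn hw hj (by omega) e2') (by omega)
  have hcyc : (Walk.cons h2 q).IsCycle :=
    (Walk.cons_isCycle_iff q h2).mpr ⟨hpath, hne⟩
  have := girth_le_of_cycle hcyc
  rw [hgw] at this
  simp only [Walk.length_cons, Walk.length_concat, Walk.length_append,
    Walk.length_copy, p1', p2', q, q0] at this
  omega

lemma exists_three_of_ncard {α : Type*} {S : Set α} (hS : S.Finite) (h : 3 ≤ S.ncard) :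
    ∃ x y z, x ∈ S ∧ y ∈ S ∧ z ∈ S ∧ x ≠ y ∧ x ≠ z ∧ y ≠ z := by
  classical
  rw [Set.ncard_eq_toFinset_card _ hS] at h
  obtain ⟨T, hT, hcard⟩ := Finset.exists_subset_card_eq h
  obtain ⟨x, y, z, hxy, hxz, hyz, rfl⟩ := Finset.card_eq_three.mp hcard
  have hx : x ∈ S := hS.mem_toFinset.mp (hT (by simp))
  have hy : y ∈ S := hS.mem_toFinset.mp (hT (by simp))
  have hz : z ∈ S := hS.mem_toFinset.mp (hT (by simp))
  exact ⟨x, y, z, hx, hy, hz, hxy, hxz, hyz⟩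

lemma offcycle_three {G : SimpleGraph V} {a : V} {w : G.Walk a a} (hw : w.IsCycle)
    (hgw : G.girth = w.length) (hg4 : 4 ≤ w.length)
    {u : V} (hu : ∀ k, k ≤ w.length → u ≠ w.getVert k)
    {i1 i2 i3 : ℕ} (h12 : i1 < i2) (h23 : i2 < i3) (h3 : i3 < w.length)
    (a1 : G.Adj u (w.getVert i1)) (a2 : G.Adj u (w.getVert i2))
    (a3 : G.Adj u (w.getVert i3)) : False := by
  have A := offcycle_pair_a hw hgw hu h12 (by omega) a1 a2
  have B := offcycle_pair_a hw hgw hu h23 h3 a2 a3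
  have C := offcycle_pair_b hw hgw hu (show i1 < i3 by omega) h3 a1 a3
  omega

theorem stmt8 (G : SimpleGraph V) (hc : G.Connected) (hδ : 3 ≤ minDeg G)
    (hg : 4 ≤ G.girth) (hfin : G.egirth ≠ ⊤) :
    tsrd G ≤ Fintype.card V - G.girth / 3 := by
  classical
  have hac : ¬ G.IsAcyclic := fun h => hfin (SimpleGraph.egirth_eq_top.mpr h)
  obtain ⟨a, w, hw, hgw⟩ := SimpleGraph.exists_girth_eq_length.mpr hac
  set c : ℕ → V := w.getVert with hc_def
  set g : ℕ := G.girth with hg_def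
  set t : ℕ := g / 3 with ht_def
  have hlen : g = w.length := hgw
  have hg4 : 4 ≤ w.length := by omega
  have h3t : 3 * t ≤ w.length := by omega
  have ht1 : 1 ≤ t := by omega
  have hdeg : ∀ v : V, 3 ≤ degN G v := fun v => le_trans hδ (Nat.sInf_le ⟨v, rfl⟩)
  have hadjc : ∀ i, i < w.length → G.Adj (c i) (c (i+1)) :=
    fun i hi => w.adj_getVert_succ hi
  have hinj : ∀ {i j : ℕ}, i < w.length → j < w.length → c i = c j → i = j :=
    fun hi hj hij => cycle_getVert_injOn hw hi hj hij
  set Z : Set V := {v | ∃ i, i < 3*t ∧ i % 3 ≠ 1 ∧ c i = v} with hZ_def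
  set W2 : Set V := {v | ∃ j, j < t ∧ c (3*j+1) = v} with hW_def
  set f : V → ℕ := fun v => if v ∈ Z then 0 else if v ∈ W2 then 2 else 1 with hf_def
  have hWnZ : ∀ v ∈ W2, v ∉ Z := by
    rintro v ⟨j, hj, rfl⟩ ⟨i, hi, him, hiv⟩
    have := hinj (by omega) (by omega) hiv
    omega
  have hf0 : ∀ v, f v = 0 ↔ v ∈ Z := by
    intro v
    by_cases h1 : v ∈ Z
    · simp [hf_def, h1]
    · by_cases h2 : v ∈ W2 <;> simp [hf_def, h1, h2]
  have hfW : ∀ v ∈ W2, f v = 2 := by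
    intro v hv
    simp [hf_def, hWnZ v hv, hv]
  have hfpos : ∀ v, v ∉ Z → 0 < f v := by
    intro v hv
    by_cases h2 : v ∈ W2 <;> simp [hf_def, hv, h2]
  -- the guard vertices dominate at most two zeros
  have key2 : ∀ j, j < t → {x | G.Adj (c (3*j+1)) x ∧ f x = 0} ⊆ {c (3*j), c (3*j+2)} := by
    intro j hj x ⟨hax, hx0⟩
    rw [hf0] at hx0
    obtain ⟨i, hi, him, rfl⟩ := hx0
    rcases lt_trichotomy i (3*j+1) with hlt | heq | hgt
    · rcases no_chord hw hgw hlt (by omega) hax.symm with h | ⟨h1, h2⟩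
      · left; congr 1; omega
      · exfalso; omega
    · exfalso; omega
    · rcases no_chord hw hgw hgt (by omega) hax with h | ⟨h1, h2⟩
      · have hieq : i = 3*j+2 := by omega
        right; rw [Set.mem_singleton_iff, hieq]
      · exfalso; omega
  have hpair : ∀ x y : V, ({x, y} : Set V).ncard ≤ 2 := by
    intro x y
    refine le_trans (Set.ncard_insert_le _ _) ?_
    simp [Set.ncard_singleton]
  have hTS : IsTSRDF G f := by
    refine ⟨?_, ?_, ?_⟩
    · -- bound by ⌈Δ/2⌉+1
      intro v
      obtain ⟨v0⟩ := hc.nonempty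
      have h1 : degN G v0 ≤ maxDeg G := Finset.le_sup (Finset.mem_univ v0)
      have h2 : 3 ≤ maxDeg G := le_trans (hdeg v0) h1
      have h3 : f v ≤ 2 := by
        by_cases hz : v ∈ Z
        · simp [hf_def, hz]
        · by_cases hW : v ∈ W2 <;> simp [hf_def, hz, hW]
      omega
    · -- strong domination of zeros
      intro v hv
      rw [hf0] at hv
      obtain ⟨i, hi, him, rfl⟩ := hv
      set j : ℕ := i / 3 with hj_def
      have hj : j < t := by omega
      have hcard : ({x | G.Adj (c (3*j+1)) x ∧ f x = 0}).ncard ≤ 2 :=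
        le_trans (Set.ncard_le_ncard (key2 j hj) (Set.toFinite _)) (hpair _ _)
      refine ⟨c (3*j+1), ?_, ?_⟩
      · rcases (show i % 3 = 0 ∨ i % 3 = 2 by omega) with h0 | h2
        · have h : i = 3*j := by omega
          rw [h]
          exact hadjc (3*j) (by omega)
        · have h : i = 3*j + 2 := by omega
          have := hadjc (3*j+1) (by omega)
          rw [h]
          exact this.symm
      · rw [hfW _ ⟨j, hj, rfl⟩]
        omega
    · -- no isolated positive vertex
      intro v hv
      have hvZ : v ∉ Z := fun h => by simp [hf0 v |>.mpr h] at hv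
      by_cases hW : v ∈ W2
      · obtain ⟨j, hj, rfl⟩ := hW
        by_contra hno
        push_neg at hno
        have hsub : {x | G.Adj (c (3*j+1)) x} ⊆ {c (3*j), c (3*j+2)} := by
          intro x hax
          refine key2 j hj ⟨hax, ?_⟩
          have := hno x hax
          omega
        have := le_trans (Set.ncard_le_ncard hsub (Set.toFinite _)) (hpair _ _)
        have := hdeg (c (3*j+1))
        rw [degN] at this
        omega
      · by_cases hon : ∃ k, k < w.length ∧ v = c k
        · obtain ⟨k, hk, rfl⟩ := hon
          have hk3t : 3*t ≤ k := by
            by_contra h'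
            push_neg at h'
            rcases Nat.lt_or_ge (k % 3) 1 with h1 | h1
            · exact hvZ ⟨k, h', by omega, rfl⟩
            · rcases Nat.lt_or_ge (k % 3) 2 with h2 | h2
              · exact hW ⟨k/3, by omega, by congr 1; omega⟩
              · exact hvZ ⟨k, h', by omega, rfl⟩
          by_cases hk1 : k + 1 < w.length
          · refine ⟨c (k+1), hadjc k hk, hfpos _ ?_⟩
            rintro ⟨i, hi, him, hiv⟩
            have := hinj (by omega) hk1 hiv
            omega
          · by_cases hk2 : 3*t ≤ k - 1
            · refine ⟨c (k-1), ?_, hfpos _ ?_⟩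
              · have := hadjc (k-1) (by omega)
                rw [show k - 1 + 1 = k by omega] at this
                exact this.symm
              · rintro ⟨i, hi, him, hiv⟩
                have := hinj (by omega) (by omega) hiv
                omega
            · -- k = 3t = w.length - 1 : all cycle-neighbors are zeros, use 3rd neighbor
              have hkval : k = 3*t ∧ w.length = 3*t + 1 := by omega
              by_contra hno2
              push_neg at hno2
              have hno : ∀ x, G.Adj (c k) x → f x = 0 := by
                intro x hax
                have := hno2 x hax
                omega
              have hsub : {x | G.Adj (c k) x} ⊆ {c (k-1), c 0} := by
                intro x hax
                have hx0 := hno x hax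
                rw [hf0] at hx0
                obtain ⟨i, hi, him, rfl⟩ := hx0
                rcases no_chord hw hgw (show i < k by omega) hk hax.symm with h | ⟨h1, h2⟩
                · left; congr 1; omega
                · right; rw [Set.mem_singleton_iff, h1]
              have := le_trans (Set.ncard_le_ncard hsub (Set.toFinite _)) (hpair _ _)
              have := hdeg (c k)
              rw [degN] at this
              omega
        · push_neg at hon
          have hoff : ∀ k, k ≤ w.length → v ≠ c k := by
            intro k hkle
            rcases eq_or_lt_of_le hkle with rfl | hlt
            · have h0 := hon 0 (by omega)
              intro hbad
              rw [hc_def] at hbad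
              rw [Walk.getVert_length] at hbad
              exact h0 (by rw [hc_def, Walk.getVert_zero]; exact hbad)
            · exact hon k hlt
          by_contra hno
          push_neg at hno
          have hZn : ∀ x, G.Adj v x → ∃ i, i < 3*t ∧ c i = x := by
            intro x hax
            have := hno x hax
            have hx0 : f x = 0 := by omega
            rw [hf0] at hx0
            obtain ⟨i, hi, him, rfl⟩ := hx0
            exact ⟨i, hi, rfl⟩
          obtain ⟨x, y, z, hx, hy, hz, hxy, hxz, hyz⟩ :=
            exists_three_of_ncard (Set.toFinite {u | G.Adj v u}) (hdeg v)
          obtain ⟨i1, hi1, rfl⟩ := hZn x hx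
          obtain ⟨i2, hi2, rfl⟩ := hZn y hy
          obtain ⟨i3, hi3, rfl⟩ := hZn z hz
          have hne12 : i1 ≠ i2 := fun h => hxy (by rw [h])
          have hne13 : i1 ≠ i3 := fun h => hxz (by rw [h])
          have hne23 : i2 ≠ i3 := fun h => hyz (by rw [h])
          have H : ∀ p q r : ℕ, p < q → q < r → r < 3*t →
              G.Adj v (c p) → G.Adj v (c q) → G.Adj v (c r) → False := by
            intro p q r hpq hqr hr ap aq ar
            exact offcycle_three hw hgw hg4 hoff hpq hqr (by omega) ap aq ar
          rcases lt_trichotomy i1 i2 with h12 | h12 | h12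
          · rcases lt_trichotomy i2 i3 with h23 | h23 | h23
            · exact H i1 i2 i3 h12 h23 hi3 hx hy hz
            · exact absurd h23 hne23
            · rcases lt_trichotomy i1 i3 with h13 | h13 | h13
              · exact H i1 i3 i2 h13 h23 hi2 hx hz hy
              · exact absurd h13 hne13
              · exact H i3 i1 i2 h13 h12 hi2 hz hx hy
          · exact absurd h12 hne12
          · rcases lt_trichotomy i1 i3 with h13 | h13 | h13
            · exact H i2 i1 i3 h12 h13 hi3 hy hx hz
            · exact absurd h13 hne13
            · rcases lt_trichotomy i2 i3 with h23 | h23 | h23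
              · exact H i2 i3 i1 h23 h13 hi1 hy hz hx
              · exact absurd h23 hne23
              · exact H i3 i2 i1 h23 h12 hi1 hz hy hx
  -- compute the weight
  have hWF : Finset.univ.filter (fun v => v ∈ W2) = (Finset.range t).image (fun j => c (3*j+1)) := by
    ext v
    simp only [Finset.mem_filter, Finset.mem_univ, true_and, Finset.mem_image, Finset.mem_range]
    constructor
    · rintro ⟨j, hj, rfl⟩; exact ⟨j, hj, rfl⟩
    · rintro ⟨j, hj, rfl⟩; exact ⟨j, hj, rfl⟩
  have hZF : Finset.univ.filter (fun v => v ∈ Z) =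
      (Finset.range t).image (fun j => c (3*j)) ∪ (Finset.range t).image (fun j => c (3*j+2)) := by
    ext v
    simp only [Finset.mem_filter, Finset.mem_univ, true_and, Finset.mem_union, Finset.mem_image,
      Finset.mem_range]
    constructor
    · rintro ⟨i, hi, him, rfl⟩
      rcases (show i % 3 = 0 ∨ i % 3 = 2 by omega) with h0 | h2
      · exact Or.inl ⟨i/3, by omega, by congr 1; omega⟩
      · exact Or.inr ⟨i/3, by omega, by congr 1; omega⟩
    · rintro (⟨j, hj, rfl⟩ | ⟨j, hj, rfl⟩)
      · exact ⟨3*j, by omega, by omega, rfl⟩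
      · exact ⟨3*j+2, by omega, by omega, rfl⟩
  have hcW : (Finset.univ.filter (fun v => v ∈ W2)).card = t := by
    rw [hWF, Finset.card_image_of_injOn, Finset.card_range]
    intro x hx y hy hxy
    simp only [Finset.coe_range, Set.mem_Iio] at hx hy
    have := hinj (i := 3*x+1) (j := 3*y+1) (by omega) (by omega) hxy
    omega
  have hcZ : (Finset.univ.filter (fun v => v ∈ Z)).card = 2*t := by
    rw [hZF, Finset.card_union_of_disjoint, Finset.card_image_of_injOn,
      Finset.card_image_of_injOn, Finset.card_range]
    · ring
    · intro x hx y hy hxy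
      simp only [Finset.coe_range, Set.mem_Iio] at hx hy
      have := hinj (i := 3*x+2) (j := 3*y+2) (by omega) (by omega) hxy
      omega
    · intro x hx y hy hxy
      simp only [Finset.coe_range, Set.mem_Iio] at hx hy
      have := hinj (i := 3*x) (j := 3*y) (by omega) (by omega) hxy
      omega
    · rw [Finset.disjoint_left]
      rintro v hv1 hv2
      simp only [Finset.mem_image, Finset.mem_range] at hv1 hv2
      obtain ⟨x, hx, rfl⟩ := hv1
      obtain ⟨y, hy, hxy⟩ := hv2
      have := hinj (i := 3*y+2) (j := 3*x) (by omega) (by omega) hxy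
      omega
  have hsum : (∑ v, f v) + 2*t = Fintype.card V + t := by
    have e : ∀ v : V, f v + (if v ∈ Z then 1 else 0) = 1 + (if v ∈ W2 then 1 else 0) := by
      intro v
      by_cases hz : v ∈ Z
      · have hw2 : v ∉ W2 := fun h => hWnZ v h hz
        simp [hf_def, hz, hw2]
      · by_cases hw2 : v ∈ W2 <;> simp [hf_def, hz, hw2]
    have e1 : (∑ v, f v) + (∑ v : V, (if v ∈ Z then 1 else 0)) =
        (∑ v : V, (1 : ℕ)) + (∑ v : V, (if v ∈ W2 then 1 else 0)) := by
      rw [← Finset.sum_add_distrib, ← Finset.sum_add_distrib]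
      exact Finset.sum_congr rfl (fun v _ => e v)
    have e2 : (∑ v : V, (if v ∈ Z then 1 else 0)) = (Finset.univ.filter (fun v => v ∈ Z)).card := by
      rw [Finset.card_filter]
    have e3 : (∑ v : V, (if v ∈ W2 then 1 else 0)) =
        (Finset.univ.filter (fun v => v ∈ W2)).card := by
      rw [Finset.card_filter]
    rw [e2, hcZ, e3, hcW] at e1
    simp only [Finset.sum_const, Finset.card_univ, smul_eq_mul, mul_one] at e1
    omega
  have hmem : tsrd G ≤ ∑ v, f v := Nat.sInf_le ⟨f, hTS, rfl⟩
  omega
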